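/- Let H be a 3-hypergraph of size p with vertex set {x_1,...,x_p}, m ≥ 3, and q = p + m − 3. Define the m-hypergraph H' on {x_1,...,x_q} whose edges are exactly the sets E ∪ {x_{p+1},...,x_q} for E an edge of H. If C is a 2-cover of H that is not a sum of two 1-covers of H and C + e_i is a sum of two 1-covers of H for all i ≤ p, then the extension C' = (C, 0,...,0) ∈ ℕ^q is a 2-cover of H' that is not a sum of two 1-covers of H', and C' + e_i is a sum of two 1-covers of H' for all i ≤ q. -/

import Mathlib

open MvPolynomial Finset

noncomputable section

/-- A `k`-cover of a hypergraph with edge set `E`: a nonzero tuple whose entries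
sum to at least `k` over every edge. -/
def IsCover {V : Type*} (E : Finset (Finset V)) (k : ℕ) (a : V → ℕ) : Prop :=
  a ≠ 0 ∧ ∀ e ∈ E, k ≤ ∑ i ∈ e, a i

/-- `a` is a sum of two 1-covers. -/
def SumTwoOneCovers {V : Type*} (E : Finset (Finset V)) (a : V → ℕ) : Prop :=
  ∃ b c : V → ℕ, IsCover E 1 b ∧ IsCover E 1 c ∧ a = b + c

/-- An independent set: no edge is contained in `S`. -/
def IsIndep {V : Type*} (E : Finset (Finset V)) (S : Finset V) : Prop :=
  ∀ e ∈ E, ¬ e ⊆ S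

/-- `i` is in the neighborhood of `S`: `i ∉ S` and some edge consists of `i`
together with vertices of `S`. -/
def InNbhd {V : Type*} (E : Finset (Finset V)) (S : Finset V) (i : V) : Prop :=
  i ∉ S ∧ ∃ e ∈ E, i ∈ e ∧ ∀ j ∈ e, j ≠ i → j ∈ S

open Classical in
/-- The 2-cover `A_S` attached to an independent set `S`:
`0` on `S`, `2` on `N(S)`, and `1` elsewhere. -/
noncomputable def indepCover {V : Type*} (E : Finset (Finset V)) (S : Finset V) : V → ℕ :=
  fun i => if i ∈ S then 0 else if InNbhd E S i then 2 else 1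

/-- The Alexander dual of the edge ideal: `⋂_{edges e} (x_i : i ∈ e)`. -/
noncomputable def dualIdeal {V : Type*} (K : Type*) [Field K] (E : Finset (Finset V)) :
    Ideal (MvPolynomial V K) :=
  ⨅ e ∈ E, Ideal.span (X '' (e : Set V))

/-- The monomial `x_1^{a_1} ⋯ x_n^{a_n}` attached to a tuple `a`. -/
noncomputable def coverMonomial {V : Type*} [Fintype V] (K : Type*) [Field K] (a : V → ℕ) :
    MvPolynomial V K :=
  ∏ i, X i ^ a i

/-- Connectedness of a hypergraph: any two vertices are linked by a chain of
vertices in which consecutive vertices share an edge. -/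
def HConnected {V : Type*} (E : Finset (Finset V)) : Prop :=
  ∀ x y : V, ∃ l : List V, l.head? = some x ∧ l.getLast? = some y ∧
    l.Chain' fun a b => ∃ e ∈ E, a ∈ e ∧ b ∈ e

/-- The cyclic 3-hypergraph with edges `{x_1,x_2,x_3}, {x_3,x_4,x_5}, …`
(0-based: `{2j, 2j+1, 2j+2}` modulo `n`). -/
def cyc3 (n : ℕ) (hn : 0 < n) : Finset (Finset (Fin n)) :=
  (Finset.range ((n + 1) / 2)).image fun j =>
    ({⟨(2 * j) % n, Nat.mod_lt _ hn⟩, ⟨(2 * j + 1) % n, Nat.mod_lt _ hn⟩,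
      ⟨(2 * j + 2) % n, Nat.mod_lt _ hn⟩} : Finset (Fin n))

/-- The alternating tuple: `1` on odd vertices `x_1, x_3, …` (0-based even
indices), `0` on even vertices. -/
def altCover (n : ℕ) : Fin n → ℕ :=
  fun i => if (i : ℕ) % 2 = 0 then 1 else 0

/-- The `m`-hypergraph `H'` on `Fin (p + m - 3)` obtained from a 3-hypergraph on
`Fin p`: each edge of `H` is enlarged by all the new vertices `x_{p+1},…,x_q`. -/
def extEdges (p m : ℕ) (E : Finset (Finset (Fin p))) (h : p ≤ p + m - 3) :
    Finset (Finset (Fin (p + m - 3))) :=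
  E.image fun e =>
    e.image (Fin.castLE h) ∪ (Finset.univ.filter fun i : Fin (p + m - 3) => p ≤ (i : ℕ))

/-- The extension of a tuple on `Fin p` by zeros to `Fin (p + m - 3)`. -/
def extTuple (p m : ℕ) (C : Fin p → ℕ) : Fin (p + m - 3) → ℕ :=
  fun i => if h : (i : ℕ) < p then C ⟨i, h⟩ else 0

theorem stmt18 {p m : ℕ} (hm : 3 ≤ m) (E : Finset (Finset (Fin p)))
    (hE3 : ∀ e ∈ E, e.card = 3) (C : Fin p → ℕ)
    (hC2 : IsCover E 2 C) (hCns : ¬ SumTwoOneCovers E C)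
    (hCi : ∀ i : Fin p, SumTwoOneCovers E (C + Pi.single i 1)) :
    IsCover (extEdges p m E (by omega)) 2 (extTuple p m C) ∧
      ¬ SumTwoOneCovers (extEdges p m E (by omega)) (extTuple p m C) ∧
      ∀ i : Fin (p + m - 3),
        SumTwoOneCovers (extEdges p m E (by omega)) (extTuple p m C + Pi.single i 1) := by
  have hpq : p ≤ p + m - 3 := by omega
  set Nw : Finset (Fin (p + m - 3)) :=
    Finset.univ.filter fun i : Fin (p + m - 3) => p ≤ (i : ℕ) with hNw
  have hmem : ∀ e' ∈ extEdges p m E (by omega : p ≤ p + m - 3),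
      ∃ e ∈ E, e' = e.image (Fin.castLE hpq) ∪ Nw := by
    intro e' he'
    simp only [extEdges, Finset.mem_image] at he'
    obtain ⟨e, he, rfl⟩ := he'
    exact ⟨e, he, rfl⟩
  have hdisj : ∀ e : Finset (Fin p), Disjoint (e.image (Fin.castLE hpq)) Nw := by
    intro e
    rw [Finset.disjoint_left]
    intro x hx hx'
    simp only [Finset.mem_image] at hx
    obtain ⟨j, _, rfl⟩ := hx
    simp only [hNw, Finset.mem_filter, Fin.coe_castLE] at hx'
    omega
  have hsum : ∀ (a : Fin (p + m - 3) → ℕ) (e : Finset (Fin p)),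
      ∑ i ∈ (e.image (Fin.castLE hpq) ∪ Nw), a i
        = ∑ j ∈ e, a (Fin.castLE hpq j) + ∑ i ∈ Nw, a i := by
    intro a e
    rw [Finset.sum_union (hdisj e), Finset.sum_image]
    intro x _ y _ h
    exact Fin.castLE_injective hpq h
  have hext_val : ∀ (a : Fin p → ℕ) (j : Fin p),
      extTuple p m a (Fin.castLE hpq j) = a j := by
    intro a j
    simp only [extTuple, Fin.coe_castLE]
    rw [dif_pos j.isLt]
  have hext_zero : ∀ (a : Fin p → ℕ) (i : Fin (p + m - 3)), ¬ (i : ℕ) < p →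
      extTuple p m a i = 0 := by
    intro a i hi
    simp only [extTuple, dif_neg hi]
  have hext_cover : ∀ (k : ℕ) (a : Fin p → ℕ), IsCover E k a →
      IsCover (extEdges p m E (by omega)) k (extTuple p m a) := by
    intro k a ⟨ha0, hacov⟩
    constructor
    · rw [Function.ne_iff] at ha0 ⊢
      obtain ⟨j, hj⟩ := ha0
      exact ⟨Fin.castLE hpq j, by rw [hext_val]; exact hj⟩
    · intro e' he'
      obtain ⟨e, he, rfl⟩ := hmem e' he'
      rw [hsum]
      have h1 : ∑ j ∈ e, extTuple p m a (Fin.castLE hpq j) = ∑ j ∈ e, a j :=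
        Finset.sum_congr rfl fun j _ => hext_val a j
      rw [h1]
      exact le_add_right (hacov e he)
  refine ⟨hext_cover 2 C hC2, ?_, ?_⟩
  · rintro ⟨b, c, hb, hc, habc⟩
    have hhigh : ∀ i : Fin (p + m - 3), ¬ (i : ℕ) < p → b i = 0 ∧ c i = 0 := by
      intro i hi
      have := congrFun habc i
      rw [hext_zero C i hi] at this
      simp only [Pi.add_apply] at this
      omega
    apply hCns
    refine ⟨fun j => b (Fin.castLE hpq j), fun j => c (Fin.castLE hpq j), ⟨?_, ?_⟩, ⟨?_, ?_⟩, ?_⟩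
    · obtain ⟨i, hi⟩ := Function.ne_iff.mp hb.1
      have hip : (i : ℕ) < p := by
        by_contra h
        exact hi ((hhigh i h).1)
      exact Function.ne_iff.mpr ⟨⟨i, hip⟩, hi⟩
    · intro e he
      have h2 := hb.2 _ (Finset.mem_image_of_mem _ he)
      rw [hsum] at h2
      have hz : ∑ i ∈ Nw, b i = 0 := by
        apply Finset.sum_eq_zero
        intro i hi
        simp only [hNw, Finset.mem_filter] at hi
        exact (hhigh i (by omega)).1
      rw [hz, add_zero] at h2
      simpa using h2
    · obtain ⟨i, hi⟩ := Function.ne_iff.mp hc.1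
      have hip : (i : ℕ) < p := by
        by_contra h
        exact hi ((hhigh i h).2)
      exact Function.ne_iff.mpr ⟨⟨i, hip⟩, hi⟩
    · intro e he
      have h2 := hc.2 _ (Finset.mem_image_of_mem _ he)
      rw [hsum] at h2
      have hz : ∑ i ∈ Nw, c i = 0 := by
        apply Finset.sum_eq_zero
        intro i hi
        simp only [hNw, Finset.mem_filter] at hi
        exact (hhigh i (by omega)).2
      rw [hz, add_zero] at h2
      simpa using h2
    · funext j
      have := congrFun habc (Fin.castLE hpq j)
      rw [hext_val] at this
      exact this
  · intro i
    by_cases hi : (i : ℕ) < p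
    · obtain ⟨b, c, hb, hc, habc⟩ := hCi ⟨i, hi⟩
      refine ⟨extTuple p m b, extTuple p m c, hext_cover 1 b hb, hext_cover 1 c hc, ?_⟩
      funext x
      by_cases hx : (x : ℕ) < p
      · have := congrFun habc ⟨x, hx⟩
        simp only [Pi.add_apply] at this ⊢
        have hxv : x = Fin.castLE hpq ⟨x, hx⟩ := by ext; rfl
        rw [hxv, hext_val, hext_val, hext_val]
        have hsing : Pi.single (M := fun _ : Fin (p + m - 3) => ℕ) i 1 (Fin.castLE hpq ⟨↑x, hx⟩)
            = Pi.single (M := fun _ : Fin p => ℕ) (⟨↑i, hi⟩ : Fin p) 1 (⟨↑x, hx⟩ : Fin p) := by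
          rw [Pi.single_apply, Pi.single_apply]
          simp only [Fin.ext_iff, Fin.coe_castLE]
        rw [hsing]
        exact this
      · simp only [Pi.add_apply, hext_zero C x hx, hext_zero b x hx, hext_zero c x hx]
        rw [Pi.single_apply, if_neg]
        intro h
        rw [h] at hx
        exact hx hi
    · refine ⟨extTuple p m C, Pi.single i 1, hext_cover 1 C ⟨hC2.1, fun e he => le_trans one_le_two (hC2.2 e he)⟩, ⟨?_, ?_⟩, rfl⟩
      · intro h
        have := congrFun h i
        simp at this
      · intro e' he'
        obtain ⟨e, he, rfl⟩ := hmem e' he'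
        have hiN : i ∈ e.image (Fin.castLE hpq) ∪ Nw := by
          apply Finset.mem_union_right
          simp only [hNw, Finset.mem_filter, Finset.mem_univ, true_and]
          omega
        have hle := Finset.single_le_sum (f := fun j => Pi.single i (1:ℕ) j)
          (fun _ _ => Nat.zero_le _) hiN
        simpa using hle
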